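/- Let 𝒢 be a connected reductive group over ℂ. For g ∈ 𝒢 let T_g be the identity component of the centre of Z_𝒢(g_s). If g, g' ∈ 𝒢 satisfy g' g⁻¹ ∈ T_g and T_g = T_{g'}, then Z_𝒢(g) = Z_𝒢(g'). -/

import Mathlib

open Matrix

variable (n : ℕ)

/-- A connected complex reductive linear group, realized as a closed connected
subgroup of `GL_n(ℂ)` all of whose invariant subspaces of the standard
representation admit invariant complements. -/
def IsConnReductiveSubgroup (G : Subgroup (GL (Fin n) ℂ)) : Prop :=
  IsClosed (G : Set (GL (Fin n) ℂ)) ∧ IsConnected (G : Set (GL (Fin n) ℂ)) ∧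
  ∀ W : Submodule ℂ (Fin n → ℂ),
    (∀ g ∈ G, W.map (Matrix.toLin' (g : Matrix (Fin n) (Fin n) ℂ)) = W) →
    ∃ W' : Submodule ℂ (Fin n → ℂ), IsCompl W W' ∧
      ∀ g ∈ G, W'.map (Matrix.toLin' (g : Matrix (Fin n) (Fin n) ℂ)) = W'

/-- Semisimple = acting diagonalizably on the standard representation. -/
def IsSemisimpleElt (g : GL (Fin n) ℂ) : Prop :=
  Module.End.IsSemisimple (Matrix.toLin' (g : Matrix (Fin n) (Fin n) ℂ))

/-- Unipotent = `g - 1` is nilpotent. -/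
def IsUnipotentElt (g : GL (Fin n) ℂ) : Prop :=
  IsNilpotent ((g : Matrix (Fin n) (Fin n) ℂ) - 1)

/-- The centre of `Z_G(s)`, as a subset of `GL_n(ℂ)`. -/
def centreCentralizer (G : Subgroup (GL (Fin n) ℂ)) (s : GL (Fin n) ℂ) :
    Set (GL (Fin n) ℂ) :=
  {z | (z ∈ G ∧ z * s = s * z) ∧
    ∀ w : GL (Fin n) ℂ, w ∈ G ∧ w * s = s * w → z * w = w * z}

/-- `T_g`: the identity component of the centre of `Z_G(g_s)`. -/
def Tsub (G : Subgroup (GL (Fin n) ℂ)) (s : GL (Fin n) ℂ) :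
    Set (GL (Fin n) ℂ) :=
  connectedComponentIn (centreCentralizer n G s) 1

/-- Any element commuting with `g` commutes with the semisimple part of `g`
(uniqueness half of the multiplicative Jordan decomposition). -/
lemma commute_semisimple_part (g s u z : GL (Fin n) ℂ)
    (hg : g = s * u) (hcomm : s * u = u * s)
    (hss : IsSemisimpleElt n s) (hu : IsUnipotentElt n u)
    (hz : z * g = g * z) : z * s = s * z := by
  classical
  set e : Matrix (Fin n) (Fin n) ℂ ≃ₐ[ℂ] Module.End ℂ (Fin n → ℂ) :=
    Matrix.toLinAlgEquiv' with he
  set F : Module.End ℂ (Fin n → ℂ) := e (g : Matrix (Fin n) (Fin n) ℂ) with hF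
  set S : Module.End ℂ (Fin n → ℂ) := e (s : Matrix (Fin n) (Fin n) ℂ) with hS
  set Z : Module.End ℂ (Fin n → ℂ) := e (z : Matrix (Fin n) (Fin n) ℂ) with hZ
  have hgm : (g : Matrix (Fin n) (Fin n) ℂ) = (s : Matrix (Fin n) (Fin n) ℂ) * u := by
    rw [hg]; rfl
  have hcm : (s : Matrix (Fin n) (Fin n) ℂ) * u = (u : Matrix (Fin n) (Fin n) ℂ) * s :=
    congrArg Units.val hcomm
  -- `F - S` is nilpotent
  have hNnil : IsNilpotent (F - S) := by
    have h1 : (g : Matrix (Fin n) (Fin n) ℂ) - s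
        = (s : Matrix (Fin n) (Fin n) ℂ) * ((u : Matrix (Fin n) (Fin n) ℂ) - 1) := by
      rw [hgm, mul_sub, mul_one]
    have h2 : IsNilpotent ((s : Matrix (Fin n) (Fin n) ℂ)
        * ((u : Matrix (Fin n) (Fin n) ℂ) - 1)) := by
      refine Commute.isNilpotent_mul_left ?_ hu
      have h : Commute (s : Matrix (Fin n) (Fin n) ℂ) (u : Matrix (Fin n) (Fin n) ℂ) := hcm
      exact h.sub_right (Commute.one_right _)
    have h3 : IsNilpotent ((g : Matrix (Fin n) (Fin n) ℂ) - s) := h1 ▸ h2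
    obtain ⟨k, hk⟩ := h3
    refine ⟨k, ?_⟩
    have : F - S = e ((g : Matrix (Fin n) (Fin n) ℂ) - s) := by rw [map_sub]
    rw [this, ← map_pow, hk, map_zero]
  -- `S` commutes with `F`
  have hSF : Commute F S := by
    have h : (g : Matrix (Fin n) (Fin n) ℂ) * s = (s : Matrix (Fin n) (Fin n) ℂ) * g := by
      rw [hgm, mul_assoc, hcm, ← mul_assoc]
    have h2 := congrArg e h
    rw [_root_.map_mul, _root_.map_mul] at h2
    exact h2
  -- canonical Jordan–Chevalley decomposition of `F`
  obtain ⟨N', hN'mem, S', hS'mem, hN'nil, hS'ss, hsum⟩ :=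
    Module.End.exists_isNilpotent_isSemisimple (f := F)
  -- `S` commutes with everything in `adjoin ℂ {F}`
  have hScomm : ∀ x ∈ Algebra.adjoin ℂ {F}, Commute S x := fun x hx =>
    Algebra.commute_of_mem_adjoin_singleton_of_commute hx hSF.symm
  -- `S - S'` is both semisimple and nilpotent, hence zero
  have hSss : S.IsSemisimple := hss
  have hdiff_ss : (S - S').IsSemisimple :=
    Module.End.IsSemisimple.sub_of_commute (hScomm S' hS'mem) hSss hS'ss
  have hdiff_nil : IsNilpotent (S - S') := by
    have hkey : S - S' = N' - (F - S) := by rw [hsum]; abel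
    rw [hkey]
    refine Commute.isNilpotent_sub ?_ hN'nil hNnil
    have h1 : Commute N' F := (Algebra.commute_of_mem_adjoin_self hN'mem).symm
    have h2 : Commute N' S := (hScomm N' hN'mem).symm
    exact h1.sub_right h2
  have hSS' : S = S' := by
    have h := Module.End.eq_zero_of_isNilpotent_isSemisimple hdiff_nil hdiff_ss
    exact sub_eq_zero.mp h
  -- `Z` commutes with `F`, hence with `S' = S`
  have hZF : Commute F Z := by
    have h : (g : Matrix (Fin n) (Fin n) ℂ) * z = (z : Matrix (Fin n) (Fin n) ℂ) * g :=
      (congrArg Units.val hz).symm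
    have h2 := congrArg e h
    rw [_root_.map_mul, _root_.map_mul] at h2
    exact h2
  have hZS : Commute Z S := by
    rw [hSS']
    exact (Algebra.commute_of_mem_adjoin_singleton_of_commute hS'mem hZF.symm)
  -- descend back to matrices, then to units
  have hmat : (z : Matrix (Fin n) (Fin n) ℂ) * s = (s : Matrix (Fin n) (Fin n) ℂ) * z := by
    apply e.injective
    rw [_root_.map_mul, _root_.map_mul]
    exact hZS
  exact Units.ext hmat

/-- If `t` commutes with `z` and `z` commutes with `g`, then `z` commutes with `t * g`. -/
lemma commute_mul_aux (t z g : GL (Fin n) ℂ) (h1 : t * z = z * t) (h2 : z * g = g * z) :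
    z * (t * g) = (t * g) * z := by
  calc z * (t * g) = (z * t) * g := (mul_assoc _ _ _).symm
    _ = (t * z) * g := by rw [h1]
    _ = t * (z * g) := mul_assoc _ _ _
    _ = t * (g * z) := by rw [h2]
    _ = (t * g) * z := (mul_assoc _ _ _).symm

/-- For a connected reductive `𝒢` and `g, g' ∈ 𝒢` with `g' g⁻¹ ∈ T_g` and
`T_g = T_{g'}`, then
`Z_𝒢(g) = Z_𝒢(g')`. -/
theorem stmt3 (G : Subgroup (GL (Fin n) ℂ)) (hred : IsConnReductiveSubgroup n G)
    (g g' s u s' u' : GL (Fin n) ℂ)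
    (hgG : g ∈ G) (hg'G : g' ∈ G)
    -- Jordan decomposition of `g`
    (hsG : s ∈ G) (huG : u ∈ G) (hg : g = s * u) (hcomm : s * u = u * s)
    (hss : IsSemisimpleElt n s) (hu : IsUnipotentElt n u)
    -- Jordan decomposition of `g'`
    (hs'G : s' ∈ G) (hu'G : u' ∈ G) (hg' : g' = s' * u') (hcomm' : s' * u' = u' * s')
    (hss' : IsSemisimpleElt n s') (hu' : IsUnipotentElt n u')
    -- the hypotheses `g' g⁻¹ ∈ T_g` and `T_g = T_{g'}`
    (ht : g' * g⁻¹ ∈ Tsub n G s) (hTT : Tsub n G s = Tsub n G s') :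
    {z : GL (Fin n) ℂ | z ∈ G ∧ z * g = g * z} =
      {z : GL (Fin n) ℂ | z ∈ G ∧ z * g' = g' * z} := by
  have htc : g' * g⁻¹ ∈ centreCentralizer n G s :=
    connectedComponentIn_subset (centreCentralizer n G s) 1 ht
  have htc' : g' * g⁻¹ ∈ centreCentralizer n G s' := by
    have h : g' * g⁻¹ ∈ Tsub n G s' := hTT ▸ ht
    exact connectedComponentIn_subset (centreCentralizer n G s') 1 h
  ext z
  simp only [Set.mem_setOf_eq]
  constructor
  · rintro ⟨hzG, hz⟩
    refine ⟨hzG, ?_⟩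
    have hzs : z * s = s * z := commute_semisimple_part n g s u z hg hcomm hss hu hz
    have hzt : (g' * g⁻¹) * z = z * (g' * g⁻¹) := htc.2 z ⟨hzG, hzs⟩
    have hgg : g' = (g' * g⁻¹) * g := by rw [inv_mul_cancel_right]
    rw [hgg] at *
    exact commute_mul_aux n _ z g hzt hz
  · rintro ⟨hzG, hz⟩
    refine ⟨hzG, ?_⟩
    have hzs : z * s' = s' * z := commute_semisimple_part n g' s' u' z hg' hcomm' hss' hu' hz
    have hzt : (g' * g⁻¹) * z = z * (g' * g⁻¹) := htc'.2 z ⟨hzG, hzs⟩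
    have hzti : (g' * g⁻¹)⁻¹ * z = z * (g' * g⁻¹)⁻¹ := by
      have hc : Commute (g' * g⁻¹) z := hzt
      exact hc.inv_left
    have hgg : g = (g' * g⁻¹)⁻¹ * g' := by
      rw [_root_.mul_inv_rev, inv_inv, mul_assoc, inv_mul_cancel, mul_one]
    rw [hgg]
    exact commute_mul_aux n _ z g' hzti hz
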